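/- arXiv:1608.06785 — 3 statements merged into one kernel-verified Lean document; each statement's English description precedes it below -/
import Mathlib

section
/- Let D ⊆ ℝ be an open interval, let A : D → (0,∞) be twice continuously differentiable, let ψ : D → ℝ be twice continuously differentiable, and define (L*f)(y) = A(y)f''(y) + A'(y)f'(y) − ψ'(y)A(y)f'(y), Γ₁(h) = A·(h')², and Γ₂(h) = ½(L*(Γ₁(h)) − 2·A·h'·(L*h)'). Then for every four times continuously differentiable h : D → ℝ and every y ∈ D: Γ₂(h)(y) = ( A'(y)²/(4A(y)) − A''(y)/2 + A(y)ψ''(y) + ψ'(y)A'(y)/2 )·A(y)h'(y)² + ( A(y)h''(y) + ½A'(y)h'(y) )². -/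
open Set

private lemma diffAt_of_cdo {f : ℝ → ℝ} {D : Set ℝ} {n : ℕ∞} (hn : 1 ≤ n)
    (hf : ContDiffOn ℝ n f D) (hD : IsOpen D) {y : ℝ} (hy : y ∈ D) :
    DifferentiableAt ℝ f y :=
  (hf.differentiableOn (by intro h0; simp_all)).differentiableAt (hD.mem_nhds hy)

/-- **Explicit formula for the iterated carré du champ operator `Γ₂`.** For
`(L*f)(y) = A(y)f''(y) + A'(y)f'(y) − ψ'(y)A(y)f'(y)`, `Γ₁(h) = A (h')²` and
`Γ₂(h) = ½(L*(Γ₁(h)) − 2 A h' (L*h)')`, one has, for `C⁴` functions `h`,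
`Γ₂(h) = (A'²/(4A) − A''/2 + Aψ'' + ψ'A'/2)·A(h')² + (Ah'' + ½A'h')²` on `D`. -/
theorem stmt3 (D : Set ℝ) (hD_open : IsOpen D) (hD_conn : D.OrdConnected)
    (A ψ h : ℝ → ℝ)
    (hA_pos : ∀ y ∈ D, 0 < A y)
    (hA : ContDiffOn ℝ 2 A D) (hψ : ContDiffOn ℝ 2 ψ D)
    (hh : ContDiffOn ℝ 4 h D)
    (Lstar : (ℝ → ℝ) → ℝ → ℝ)
    (hL : ∀ u : ℝ → ℝ, ∀ y : ℝ, Lstar u y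
      = A y * deriv (deriv u) y + deriv A y * deriv u y - deriv ψ y * A y * deriv u y)
    (Γ₁ Γ₂ : (ℝ → ℝ) → ℝ → ℝ)
    (hΓ₁ : ∀ u : ℝ → ℝ, ∀ y : ℝ, Γ₁ u y = A y * (deriv u y)^2)
    (hΓ₂ : ∀ u : ℝ → ℝ, ∀ y : ℝ, Γ₂ u y
      = (1/2) * (Lstar (Γ₁ u) y - 2 * A y * deriv u y * deriv (Lstar u) y)) :
    ∀ y ∈ D,
      Γ₂ h y
        = ((deriv A y)^2 / (4 * A y) - deriv (deriv A) y / 2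
            + A y * deriv (deriv ψ) y + deriv ψ y * deriv A y / 2) * (A y * (deriv h y)^2)
          + (A y * deriv (deriv h) y + (1/2) * deriv A y * deriv h y)^2 := by
  -- regularity of derivatives
  have hA1 : ContDiffOn ℝ 1 (deriv A) D := hA.deriv_of_isOpen hD_open (by norm_num)
  have hψ1 : ContDiffOn ℝ 1 (deriv ψ) D := hψ.deriv_of_isOpen hD_open (by norm_num)
  have hh1 : ContDiffOn ℝ 3 (deriv h) D := hh.deriv_of_isOpen hD_open (by norm_num)
  have hh2 : ContDiffOn ℝ 2 (deriv (deriv h)) D := hh1.deriv_of_isOpen hD_open (by norm_num)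
  -- pointwise `HasDerivAt` facts
  have dA : ∀ z ∈ D, HasDerivAt A (deriv A z) z := fun z hz =>
    (diffAt_of_cdo (by norm_num) hA hD_open hz).hasDerivAt
  have dA' : ∀ z ∈ D, HasDerivAt (deriv A) (deriv (deriv A) z) z := fun z hz =>
    (diffAt_of_cdo (by norm_num) hA1 hD_open hz).hasDerivAt
  have dψ' : ∀ z ∈ D, HasDerivAt (deriv ψ) (deriv (deriv ψ) z) z := fun z hz =>
    (diffAt_of_cdo (by norm_num) hψ1 hD_open hz).hasDerivAt
  have dh' : ∀ z ∈ D, HasDerivAt (deriv h) (deriv (deriv h) z) z := fun z hz =>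
    (diffAt_of_cdo (by norm_num) hh1 hD_open hz).hasDerivAt
  have dh'' : ∀ z ∈ D, HasDerivAt (deriv (deriv h)) (deriv (deriv (deriv h)) z) z := fun z hz =>
    (diffAt_of_cdo (by norm_num) hh2 hD_open hz).hasDerivAt
  -- the functions Γ₁ h and Lstar h in explicit form
  have eΓ₁ : Γ₁ h = fun w => A w * (deriv h w)^2 := funext (hΓ₁ h)
  have eL : Lstar h = fun w =>
      A w * deriv (deriv h) w + deriv A w * deriv h w - deriv ψ w * A w * deriv h w :=
    funext (hL h)
  -- first derivative of Γ₁ h on D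
  have F1 : ∀ z ∈ D, deriv (Γ₁ h) z
      = deriv A z * (deriv h z)^2 + A z * (2 * deriv h z * deriv (deriv h) z) := by
    intro z hz
    rw [eΓ₁]
    have H : HasDerivAt (fun w => A w * (deriv h w)^2)
        (deriv A z * (deriv h z)^2 + A z * (2 * deriv h z * deriv (deriv h) z)) z := by
      have := (dA z hz).mul ((dh' z hz).pow 2)
      exact this.congr_deriv (by norm_num <;> ring)
    exact H.deriv
  -- first derivative of Lstar h on D
  have F2 : ∀ z ∈ D, deriv (Lstar h) z
      = (deriv A z * deriv (deriv h) z + A z * deriv (deriv (deriv h)) z)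
        + (deriv (deriv A) z * deriv h z + deriv A z * deriv (deriv h) z)
        - ((deriv (deriv ψ) z * A z + deriv ψ z * deriv A z) * deriv h z
            + deriv ψ z * A z * deriv (deriv h) z) := by
    intro z hz
    rw [eL]
    have H : HasDerivAt (fun w =>
        A w * deriv (deriv h) w + deriv A w * deriv h w - deriv ψ w * A w * deriv h w)
        ((deriv A z * deriv (deriv h) z + A z * deriv (deriv (deriv h)) z)
          + (deriv (deriv A) z * deriv h z + deriv A z * deriv (deriv h) z)
          - ((deriv (deriv ψ) z * A z + deriv ψ z * deriv A z) * deriv h z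
              + deriv ψ z * A z * deriv (deriv h) z)) z :=
      (((dA z hz).mul (dh'' z hz)).add ((dA' z hz).mul (dh' z hz))).sub
        ((((dψ' z hz).mul (dA z hz)).mul (dh' z hz)))
    exact H.deriv
  intro y hy
  have hmem : D ∈ nhds y := hD_open.mem_nhds hy
  -- second derivative of Γ₁ h at y
  have G2 : deriv (deriv (Γ₁ h)) y
      = (deriv (deriv A) y * (deriv h y)^2 + deriv A y * (2 * deriv h y * deriv (deriv h) y))
        + (deriv A y * (2 * deriv h y * deriv (deriv h) y)
            + A y * (2 * deriv (deriv h) y * deriv (deriv h) y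
                      + 2 * deriv h y * deriv (deriv (deriv h)) y)) := by
    have heq : deriv (Γ₁ h) =ᶠ[nhds y]
        (fun w => deriv A w * (deriv h w)^2 + A w * (2 * deriv h w * deriv (deriv h) w)) :=
      Filter.eventuallyEq_of_mem hmem F1
    rw [heq.deriv_eq]
    have H : HasDerivAt
        (fun w => deriv A w * (deriv h w)^2 + A w * (2 * deriv h w * deriv (deriv h) w))
        ((deriv (deriv A) y * (deriv h y)^2 + deriv A y * (2 * deriv h y * deriv (deriv h) y))
          + (deriv A y * (2 * deriv h y * deriv (deriv h) y)
              + A y * (2 * deriv (deriv h) y * deriv (deriv h) y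
                        + 2 * deriv h y * deriv (deriv (deriv h)) y))) y := by
      have h1 : HasDerivAt (fun w => deriv A w * (deriv h w)^2)
          (deriv (deriv A) y * (deriv h y)^2 + deriv A y * (2 * deriv h y * deriv (deriv h) y))
          y := by
        have := (dA' y hy).mul ((dh' y hy).pow 2)
        exact this.congr_deriv (by norm_num <;> ring)
      have h2 : HasDerivAt (fun w => A w * (2 * deriv h w * deriv (deriv h) w))
          (deriv A y * (2 * deriv h y * deriv (deriv h) y)
            + A y * (2 * deriv (deriv h) y * deriv (deriv h) y
                      + 2 * deriv h y * deriv (deriv (deriv h)) y)) y := by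
        have hin : HasDerivAt (fun w => 2 * deriv h w * deriv (deriv h) w)
            (2 * deriv (deriv h) y * deriv (deriv h) y
              + 2 * deriv h y * deriv (deriv (deriv h)) y) y := by
          have := ((dh' y hy).const_mul 2).mul (dh'' y hy)
          exact this.congr_deriv (by ring)
        exact (dA y hy).mul hin
      exact h1.add h2
    exact H.deriv
  have hAne : A y ≠ 0 := ne_of_gt (hA_pos y hy)
  rw [hΓ₂ h y, hL (Γ₁ h) y, G2, F1 y hy, F2 y hy]
  field_simp
  ring
end

section
/- Let D ⊆ ℝ be an open interval, let b : D → (0,∞) be twice continuously differentiable, let a : D → ℝ be continuously differentiable, set A(y) = ½b(y)², and let ψ : D → ℝ be twice continuously differentiable with ψ'(y) = A'(y)/A(y) − a(y)/A(y) for all y ∈ D. Define (L*f)(y) = A(y)f''(y) + A'(y)f'(y) − ψ'(y)A(y)f'(y), Γ₁(h) = A·(h')², and Γ₂(h) = ½(L*(Γ₁(h)) − 2·A·h'·(L*h)'). Assume there is ρ > 0 such that ½b(y)b''(y) − a'(y) + a(y)b'(y)/b(y) ≥ ρ for all y ∈ D. Then for every four times continuously differentiable h : D → ℝ and every y ∈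 D, Γ₂(h)(y) ≥ ρ·Γ₁(h)(y); that is, L* satisfies the Bakry–Émery curvature-dimension condition CD(ρ, ∞). -/
set_option maxHeartbeats 1000000


open Set

/-- **Bakry–Émery curvature-dimension condition `CD(ρ,∞)`.** With `A = ½b²`,
`ψ' = A'/A − a/A`, `(L*f) = Af'' + A'f' − ψ'Af'`, `Γ₁(h) = A(h')²` and
`Γ₂(h) = ½(L*(Γ₁(h)) − 2Ah'(L*h)')`, if `½bb'' − a' + ab'/b ≥ ρ > 0` on `D`, then
`Γ₂(h) ≥ ρ Γ₁(h)` on `D` for every `C⁴` function `h`. -/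
theorem stmt5 (D : Set ℝ) (hD_open : IsOpen D) (hD_conn : D.OrdConnected)
    (a b A ψ : ℝ → ℝ) (ρ : ℝ) (hρ : 0 < ρ)
    (hb_pos : ∀ y ∈ D, 0 < b y)
    (hb : ContDiffOn ℝ 2 b D) (ha : ContDiffOn ℝ 1 a D)
    (hA : ∀ y : ℝ, A y = (1/2) * (b y)^2)
    (hψ : ContDiffOn ℝ 2 ψ D)
    (hψ' : ∀ y ∈ D, deriv ψ y = deriv A y / A y - a y / A y)
    (Lstar : (ℝ → ℝ) → ℝ → ℝ)
    (hL : ∀ u : ℝ → ℝ, ∀ y : ℝ, Lstar u y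
      = A y * deriv (deriv u) y + deriv A y * deriv u y - deriv ψ y * A y * deriv u y)
    (Γ₁ Γ₂ : (ℝ → ℝ) → ℝ → ℝ)
    (hΓ₁ : ∀ u : ℝ → ℝ, ∀ y : ℝ, Γ₁ u y = A y * (deriv u y)^2)
    (hΓ₂ : ∀ u : ℝ → ℝ, ∀ y : ℝ, Γ₂ u y
      = (1/2) * (Lstar (Γ₁ u) y - 2 * A y * deriv u y * deriv (Lstar u) y))
    (hcurv : ∀ y ∈ D, (1/2) * b y * deriv (deriv b) y - deriv a y + a y * deriv b y / b y ≥ ρ) :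
    ∀ h : ℝ → ℝ, ContDiffOn ℝ 4 h D → ∀ y ∈ D, Γ₂ h y ≥ ρ * Γ₁ h y := by
  have hAfun : A = fun z => (1/2) * (b z)^2 := funext hA
  subst hAfun
  intro h hh y hy
  -- nonvanishing
  have hbne : ∀ z ∈ D, b z ≠ 0 := fun z hz => (hb_pos z hz).ne'
  -- differentiability of b and deriv b at points of D
  have hb1 : ContDiffOn ℝ 1 (deriv b) D := hb.deriv_of_isOpen hD_open (by norm_num)
  have Pb : ∀ z ∈ D, HasDerivAt b (deriv b z) z := fun z hz =>
    ((hb.contDiffAt (hD_open.mem_nhds hz)).differentiableAt (by norm_num)).hasDerivAt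
  have Pb1 : ∀ z ∈ D, HasDerivAt (deriv b) (deriv (deriv b) z) z := fun z hz =>
    ((hb1.contDiffAt (hD_open.mem_nhds hz)).differentiableAt (by norm_num)).hasDerivAt
  -- a
  have Pa : ∀ z ∈ D, HasDerivAt a (deriv a z) z := fun z hz =>
    ((ha.contDiffAt (hD_open.mem_nhds hz)).differentiableAt (by norm_num)).hasDerivAt
  -- h and its derivatives
  have hh1 : ContDiffOn ℝ 3 (deriv h) D := hh.deriv_of_isOpen hD_open (by norm_num)
  have hh2 : ContDiffOn ℝ 2 (deriv (deriv h)) D := hh1.deriv_of_isOpen hD_open (by norm_num)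
  have hh3 : ContDiffOn ℝ 1 (deriv (deriv (deriv h))) D :=
    hh2.deriv_of_isOpen hD_open (by norm_num)
  have Ph1 : ∀ z ∈ D, HasDerivAt (deriv h) (deriv (deriv h) z) z := fun z hz =>
    ((hh1.contDiffAt (hD_open.mem_nhds hz)).differentiableAt (by norm_num)).hasDerivAt
  have Ph2 : ∀ z ∈ D, HasDerivAt (deriv (deriv h)) (deriv (deriv (deriv h)) z) z := fun z hz =>
    ((hh2.contDiffAt (hD_open.mem_nhds hz)).differentiableAt (by norm_num)).hasDerivAt
  -- derivative of A
  have PA : ∀ z ∈ D, HasDerivAt (fun z => (1/2) * (b z)^2) (b z * deriv b z) z := by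
    intro z hz
    have := ((Pb z hz).pow 2).const_mul (1/2 : ℝ)
    refine this.congr_deriv ?_
    ring
  have hderivA : ∀ z ∈ D, deriv (fun z => (1/2) * (b z)^2) z = b z * deriv b z :=
    fun z hz => (PA z hz).deriv
  -- the eventual equality filter trick
  have hmemD : D ∈ nhds y := hD_open.mem_nhds hy
  -- Γ₁ h as a concrete function
  have hG : Γ₁ h = fun z => (1/2) * (b z)^2 * (deriv h z)^2 := funext (hΓ₁ h)
  -- first derivative of Γ₁ h on D
  have PG : ∀ z ∈ D, HasDerivAt (Γ₁ h)
      (b z * deriv b z * (deriv h z)^2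
        + (1/2) * (b z)^2 * (2 * deriv h z * deriv (deriv h) z)) z := by
    intro z hz
    rw [hG]
    have := (PA z hz).mul ((Ph1 z hz).pow 2)
    refine this.congr_deriv ?_
    simp only [Pi.pow_apply]
    ring
  have hG1 : ∀ z ∈ D, deriv (Γ₁ h) z
      = b z * deriv b z * (deriv h z)^2
        + (1/2) * (b z)^2 * (2 * deriv h z * deriv (deriv h) z) :=
    fun z hz => (PG z hz).deriv
  -- second derivative of Γ₁ h at y
  have hG2 : deriv (deriv (Γ₁ h)) y
      = ((deriv b y)^2 + b y * deriv (deriv b) y) * (deriv h y)^2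
        + 4 * b y * deriv b y * deriv h y * deriv (deriv h) y
        + (1/2) * (b y)^2 * (2 * (deriv (deriv h) y)^2
            + 2 * deriv h y * deriv (deriv (deriv h)) y) := by
    have hev : deriv (Γ₁ h) =ᶠ[nhds y]
        (fun z => b z * deriv b z * (deriv h z)^2
          + (1/2) * (b z)^2 * (2 * deriv h z * deriv (deriv h) z)) :=
      Filter.eventuallyEq_of_mem hmemD hG1
    rw [hev.deriv_eq]
    have hd : HasDerivAt (fun z => b z * deriv b z * (deriv h z)^2
          + (1/2) * (b z)^2 * (2 * deriv h z * deriv (deriv h) z))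
        ((deriv b y * deriv b y + b y * deriv (deriv b) y) * (deriv h y)^2
          + b y * deriv b y * (2 * (deriv h y)^(2-1) * deriv (deriv h) y)
          + ((b y * deriv b y) * (2 * deriv h y * deriv (deriv h) y)
            + (1/2) * (b y)^2 * ((2 * deriv (deriv h) y) * deriv (deriv h) y
              + (2 * deriv h y) * deriv (deriv (deriv h)) y))) y := by
      exact (((Pb y hy).mul (Pb1 y hy)).mul ((Ph1 y hy).pow 2)).add
        ((PA y hy).mul (((Ph1 y hy).const_mul 2).mul (Ph2 y hy)))
    rw [hd.deriv]
    ring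
  -- Lstar h on D equals A h'' + a h'
  have hLh : ∀ z ∈ D, Lstar h z
      = (1/2) * (b z)^2 * deriv (deriv h) z + a z * deriv h z := by
    intro z hz
    rw [hL]
    have hAz : (1/2) * (b z)^2 ≠ 0 := by
      have := hbne z hz; positivity
    have hbz := hbne z hz
    rw [hψ' z hz, hderivA z hz]
    field_simp
    ring
  -- derivative of Lstar h at y
  have hLh' : deriv (Lstar h) y
      = b y * deriv b y * deriv (deriv h) y + (1/2) * (b y)^2 * deriv (deriv (deriv h)) y
        + deriv a y * deriv h y + a y * deriv (deriv h) y := by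
    have hev : Lstar h =ᶠ[nhds y]
        (fun z => (1/2) * (b z)^2 * deriv (deriv h) z + a z * deriv h z) :=
      Filter.eventuallyEq_of_mem hmemD hLh
    rw [hev.deriv_eq]
    have hd := ((PA y hy).mul (Ph2 y hy)).add ((Pa y hy).mul (Ph1 y hy))
    rw [show (fun z => (1/2) * (b z)^2 * deriv (deriv h) z + a z * deriv h z)
      = ((fun z => (1/2) * (b z)^2) * deriv (deriv h) + a * deriv h) from rfl, hd.deriv]
    ring
  -- Lstar (Γ₁ h) at y
  have hLG : Lstar (Γ₁ h) y
      = (1/2) * (b y)^2 * deriv (deriv (Γ₁ h)) y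
        + a y * deriv (Γ₁ h) y := by
    rw [hL]
    have hAy : (1/2) * (b y)^2 ≠ 0 := by
      have := hbne y hy; positivity
    have hby := hbne y hy
    rw [hψ' y hy, hderivA y hy]
    field_simp
    ring
  -- assemble
  set B := b y with hB
  set B1 := deriv b y
  set B2 := deriv (deriv b) y
  set H1 := deriv h y
  set H2 := deriv (deriv h) y
  set H3 := deriv (deriv (deriv h)) y
  have hBne : B ≠ 0 := hbne y hy
  have hcc := hcurv y hy
  have hkey : Γ₂ h y - ρ * Γ₁ h y
      = ((1/2) * B^2 * H2 + (1/2) * B * B1 * H1)^2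
        + (1/2) * B^2 * ((1/2) * B * B2 - deriv a y + a y * B1 / B - ρ) * H1^2 := by
    rw [hΓ₂, hΓ₁, hLG, hG2, hG1 y hy, hLh']
    field_simp
    ring
  have hpos : ((1/2) * B^2 * H2 + (1/2) * B * B1 * H1)^2
        + (1/2) * B^2 * ((1/2) * B * B2 - deriv a y + a y * B1 / B - ρ) * H1^2 ≥ 0 := by
    have h1 : (1/2) * B * B2 - deriv a y + a y * B1 / B - ρ ≥ 0 := by linarith
    have h2 : (0:ℝ) < (1/2) * B^2 := by positivity
    nlinarith [sq_nonneg ((1/2) * B^2 * H2 + (1/2) * B * B1 * H1), sq_nonneg H1,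
      mul_nonneg (mul_nonneg h2.le h1) (sq_nonneg H1)]
  linarith
end

section
/- Let −∞ ≤ d₋ < d₊ ≤ ∞, D = (d₋,d₊), let A : D → (0,∞) be continuously differentiable, let ψ : D → ℝ be continuously differentiable with Z := ∫_D e^{−ψ(y)}dy ∈ (0,∞), and let h : D → (0,∞) be twice continuously differentiable. Define (L*h)(y) = A(y)h''(y) + A'(y)h'(y) − ψ'(y)A(y)h'(y) and μ_∞(dy) = (e^{−ψ(y)}/Z)dy. Assume that (i) the limits of (log h(y) + 1)·A(y)h'(y)e^{−ψ(y)} as y tends to each endpoint d₋ and d₊ are zero, and (ii) the functions y ↦ (log h(y)+1)(L*h)(y)e^{−ψ(y)} and y ↦ A(y)h'(y)²/h(y)·e^{−ψ(y)} are Lebesgue integrable on D. Then ∫_D (log h(y) + 1)·(L*h)(y) μ_∞(dy) = − ∫_D A(y)h'(y)²/h(y) μ_∞(dy). -/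
open MeasureTheory Filter Set

lemma ftc_zero (D : Set ℝ) (g F : ℝ → ℝ) (a b : ℕ → ℝ)
    (hab : ∀ n, a n ≤ b n) (hsub : ∀ n, Set.Icc (a n) (b n) ⊆ D)
    (hcover : AECover (volume.restrict D) atTop (fun n => Set.Ioc (a n) (b n)))
    (hderiv : ∀ x ∈ D, HasDerivAt g (F x) x)
    (hint : IntegrableOn F D)
    (hga : Tendsto (fun n => g (a n)) atTop (nhds 0))
    (hgb : Tendsto (fun n => g (b n)) atTop (nhds 0)) :
    ∫ x in D, F x = 0 := by
  have h1 : Tendsto (fun n => ∫ x in Set.Ioc (a n) (b n), F x ∂(volume.restrict D)) atTop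
      (nhds (∫ x in D, F x)) := hcover.integral_tendsto_of_countably_generated hint
  have h2 : ∀ n, ∫ x in Set.Ioc (a n) (b n), F x ∂(volume.restrict D) = g (b n) - g (a n) := by
    intro n
    rw [Measure.restrict_restrict measurableSet_Ioc,
      Set.inter_eq_self_of_subset_left (Set.Ioc_subset_Icc_self.trans (hsub n)),
      ← intervalIntegral.integral_of_le (hab n)]
    exact intervalIntegral.integral_eq_sub_of_hasDerivAt
      (fun x hx => hderiv x (hsub n (by rwa [Set.uIcc_of_le (hab n)] at hx)))
      ((intervalIntegrable_iff_integrableOn_Ioc_of_le (hab n)).2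
        (hint.mono_set (Set.Ioc_subset_Icc_self.trans (hsub n))))
  have h3 : Tendsto (fun n => ∫ x in Set.Ioc (a n) (b n), F x ∂(volume.restrict D)) atTop
      (nhds 0) := by
    simp only [h2]
    simpa using hgb.sub hga
  exact tendsto_nhds_unique h1 h3

lemma int_deriv_zero (dm dp : EReal) (hd : dm < dp) (D : Set ℝ)
    (hDdef : D = {y : ℝ | dm < (y : EReal) ∧ (y : EReal) < dp})
    (g F : ℝ → ℝ)
    (hderiv : ∀ x ∈ D, HasDerivAt g (F x) x)
    (hint : IntegrableOn F D)
    (hbm : Tendsto g (Filter.comap (fun x : ℝ => (x : EReal)) (nhds dm) ⊓ Filter.principal D)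
      (nhds 0))
    (hbp : Tendsto g (Filter.comap (fun x : ℝ => (x : EReal)) (nhds dp) ⊓ Filter.principal D)
      (nhds 0)) :
    ∫ x in D, F x = 0 := by
  have key : ∀ (e : EReal) (c : ℕ → ℝ),
      Tendsto g (Filter.comap (fun x : ℝ => (x : EReal)) (nhds e) ⊓ Filter.principal D) (nhds 0) →
      Tendsto (fun n => ((c n : ℝ) : EReal)) atTop (nhds e) →
      (∀ n, c n ∈ D) →
      Tendsto (fun n => g (c n)) atTop (nhds 0) := by
    intro e c hb hcoe hmem
    exact hb.comp (tendsto_inf.2 ⟨tendsto_comap_iff.2 hcoe,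
      tendsto_principal.2 (Eventually.of_forall hmem)⟩)
  have tend0 : Tendsto (fun n : ℕ => 1 / ((n : ℝ) + 1)) atTop (nhds 0) :=
    tendsto_one_div_add_atTop_nhds_zero_nat
  have hpos : ∀ n : ℕ, 0 < 1 / ((n : ℝ) + 1) := fun n => by positivity
  have hle1 : ∀ n : ℕ, 1 / ((n : ℝ) + 1) ≤ 1 := fun n => by
    rw [div_le_one (by positivity)]; linarith [Nat.cast_nonneg (α := ℝ) n]
  induction dm using EReal.rec with
  | top => exact absurd hd (by simp)
  | bot =>
    induction dp using EReal.rec with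
    | bot => exact absurd hd (by simp)
    | top =>
      -- D = univ
      have hDu : D = Set.univ := by
        rw [hDdef]; ext y; simp [EReal.bot_lt_coe, EReal.coe_lt_top]
      subst hDu
      have hatb : Tendsto (fun n : ℕ => -(n : ℝ)) atTop atBot :=
        tendsto_neg_atBot_iff.2 tendsto_natCast_atTop_atTop
      have hatt : Tendsto (fun n : ℕ => (n : ℝ)) atTop atTop := tendsto_natCast_atTop_atTop
      refine ftc_zero _ g F (fun n => -(n : ℝ)) (fun n => (n : ℝ))
        (fun n => neg_le_self (Nat.cast_nonneg n)) (fun n => Set.subset_univ _)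
        ?_ hderiv hint ?_ ?_
      · rw [Measure.restrict_univ]
        exact MeasureTheory.aecover_Ioc hatb hatt
      · refine key ⊥ _ hbm ?_ (fun n => Set.mem_univ _)
        exact EReal.tendsto_nhds_bot_iff_real.2 fun x =>
          (hatb.eventually_lt_atBot x).mono fun n hn => EReal.coe_lt_coe_iff.2 hn
      · refine key ⊤ _ hbp ?_ (fun n => Set.mem_univ _)
        exact EReal.tendsto_nhds_top_iff_real.2 fun x =>
          (hatt.eventually_gt_atTop x).mono fun n hn => EReal.coe_lt_coe_iff.2 hn
    | coe q =>
      -- D = Iio q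
      have hDu : D = Set.Iio q := by
        rw [hDdef]; ext y; simp [EReal.bot_lt_coe, EReal.coe_lt_coe_iff]
      subst hDu
      set a : ℕ → ℝ := fun n => q - 1 - n with ha_def
      set b : ℕ → ℝ := fun n => q - 1 / ((n : ℝ) + 1) with hb_def
      have hatb : Tendsto a atTop atBot := by
        apply tendsto_atBot_add_const_left
        exact tendsto_neg_atBot_iff.2 tendsto_natCast_atTop_atTop
      have hbq : Tendsto b atTop (nhds q) := by
        simpa only [hb_def, sub_zero] using tendsto_const_nhds.sub tend0
      have hab : ∀ n, a n ≤ b n := fun n => by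
        simp only [ha_def, hb_def]
        have := hle1 n
        have := Nat.cast_nonneg (α := ℝ) n
        linarith
      have hsub : ∀ n, Set.Icc (a n) (b n) ⊆ Set.Iio q := fun n x hx => by
        have := hx.2
        have := hpos n
        exact lt_of_le_of_lt hx.2 (by simp only [hb_def]; linarith [hpos n])
      refine ftc_zero _ g F a b hab hsub ?_ hderiv hint ?_ ?_
      · have c1 : AECover (volume.restrict (Set.Iio q)) atTop (fun n => Set.Ioi (a n)) :=
          MeasureTheory.aecover_Ioi hatb
        have c2 : AECover (volume.restrict (Set.Iio q)) atTop (fun n => Set.Iic (b n)) :=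
          MeasureTheory.aecover_Iio_of_Iic hbq
        simpa only [Set.Ioi_inter_Iic] using c1.inter c2
      · refine key ⊥ a hbm ?_ (fun n => hsub n ⟨le_refl _, hab n⟩)
        exact EReal.tendsto_nhds_bot_iff_real.2 fun x =>
          (hatb.eventually_lt_atBot x).mono fun n hn => EReal.coe_lt_coe_iff.2 hn
      · refine key (q : EReal) b hbp ?_ (fun n => hsub n ⟨hab n, le_refl _⟩)
        exact (continuous_coe_real_ereal.tendsto q).comp hbq
  | coe p =>
    induction dp using EReal.rec with
    | bot => exact absurd hd (by simp)
    | top =>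
      -- D = Ioi p
      have hDu : D = Set.Ioi p := by
        rw [hDdef]; ext y; simp [EReal.coe_lt_top, EReal.coe_lt_coe_iff]
      subst hDu
      set a : ℕ → ℝ := fun n => p + 1 / ((n : ℝ) + 1) with ha_def
      set b : ℕ → ℝ := fun n => p + 1 + n with hb_def
      have hap : Tendsto a atTop (nhds p) := by
        simpa only [ha_def, add_zero] using tendsto_const_nhds.add tend0
      have hatt : Tendsto b atTop atTop := by
        apply tendsto_atTop_add_const_left
        exact tendsto_natCast_atTop_atTop
      have hab : ∀ n, a n ≤ b n := fun n => by
        simp only [ha_def, hb_def]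
        have := hle1 n
        have := Nat.cast_nonneg (α := ℝ) n
        linarith
      have hsub : ∀ n, Set.Icc (a n) (b n) ⊆ Set.Ioi p := fun n x hx => by
        have := hpos n
        exact lt_of_lt_of_le (by simp only [ha_def]; linarith) hx.1
      refine ftc_zero _ g F a b hab hsub ?_ hderiv hint ?_ ?_
      · have c1 : AECover (volume.restrict (Set.Ioi p)) atTop (fun n => Set.Ioi (a n)) :=
          MeasureTheory.aecover_Ioi_of_Ioi hap
        have c2 : AECover (volume.restrict (Set.Ioi p)) atTop (fun n => Set.Iic (b n)) :=
          MeasureTheory.aecover_Iic hatt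
        simpa only [Set.Ioi_inter_Iic] using c1.inter c2
      · refine key (p : EReal) a hbm ?_ (fun n => hsub n ⟨le_refl _, hab n⟩)
        exact (continuous_coe_real_ereal.tendsto p).comp hap
      · refine key ⊤ b hbp ?_ (fun n => hsub n ⟨hab n, le_refl _⟩)
        exact EReal.tendsto_nhds_top_iff_real.2 fun x =>
          (hatt.eventually_gt_atTop x).mono fun n hn => EReal.coe_lt_coe_iff.2 hn
    | coe q =>
      -- D = Ioo p q
      have hpq : p < q := EReal.coe_lt_coe_iff.1 hd
      have hDu : D = Set.Ioo p q := by
        rw [hDdef]; ext y; simp [EReal.coe_lt_coe_iff, Set.mem_Ioo]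
      subst hDu
      set a : ℕ → ℝ := fun n => p + (q - p) / 2 * (1 / ((n : ℝ) + 1)) with ha_def
      set b : ℕ → ℝ := fun n => q - (q - p) / 2 * (1 / ((n : ℝ) + 1)) with hb_def
      have hap : Tendsto a atTop (nhds p) := by
        simpa only [ha_def, mul_zero, add_zero] using
          tendsto_const_nhds.add (tendsto_const_nhds.mul tend0)
      have hbq : Tendsto b atTop (nhds q) := by
        simpa only [hb_def, mul_zero, sub_zero] using
          tendsto_const_nhds.sub (tendsto_const_nhds.mul tend0)
      have hab : ∀ n, a n ≤ b n := fun n => by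
        simp only [ha_def, hb_def]
        have h1 := hpos n
        have h2 := hle1 n
        nlinarith
      have hsub : ∀ n, Set.Icc (a n) (b n) ⊆ Set.Ioo p q := fun n x hx => by
        have h1 := hpos n
        constructor
        · refine lt_of_lt_of_le ?_ hx.1
          simp only [ha_def]; nlinarith
        · refine lt_of_le_of_lt hx.2 ?_
          simp only [hb_def]; nlinarith
      refine ftc_zero _ g F a b hab hsub ?_ hderiv hint ?_ ?_
      · exact MeasureTheory.aecover_Ioo_of_Ioc hap hbq
      · refine key (p : EReal) a hbm ?_ (fun n => hsub n ⟨le_refl _, hab n⟩)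
        exact (continuous_coe_real_ereal.tendsto p).comp hap
      · refine key (q : EReal) b hbp ?_ (fun n => hsub n ⟨hab n, le_refl _⟩)
        exact (continuous_coe_real_ereal.tendsto q).comp hbq

/-- **Entropy production (Fisher information) identity for `L*` under the Gibbs measure.**
With `(L*h) = Ah'' + A'h' − ψ'Ah'` and `μ_∞(dy) = (e^{−ψ(y)}/Z)dy`, vanishing boundary terms
and suitable integrability give `∫ (log h + 1) L*h dμ_∞ = −∫ A(h')²/h dμ_∞`. -/
theorem stmt9 (dm dp : EReal) (hd : dm < dp)
    (D : Set ℝ) (hDdef : D = {y : ℝ | dm < (y : EReal) ∧ (y : EReal) < dp})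
    (A ψ h : ℝ → ℝ) (Z : ℝ)
    (hA_pos : ∀ y ∈ D, 0 < A y) (hA : ContDiffOn ℝ 1 A D)
    (hψ : ContDiffOn ℝ 1 ψ D)
    (hZdef : Z = ∫ y in D, Real.exp (-ψ y))
    (hZint : IntegrableOn (fun y => Real.exp (-ψ y)) D)
    (hZpos : 0 < Z)
    (hh_pos : ∀ y ∈ D, 0 < h y) (hh : ContDiffOn ℝ 2 h D)
    (Lstar : (ℝ → ℝ) → ℝ → ℝ)
    (hL : ∀ u : ℝ → ℝ, ∀ y : ℝ, Lstar u y
      = A y * deriv (deriv u) y + deriv A y * deriv u y - deriv ψ y * A y * deriv u y)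
    (hbm : Filter.Tendsto
      (fun y => (Real.log (h y) + 1) * A y * deriv h y * Real.exp (-ψ y))
      (Filter.comap (fun x : ℝ => (x : EReal)) (nhds dm) ⊓ Filter.principal D) (nhds 0))
    (hbp : Filter.Tendsto
      (fun y => (Real.log (h y) + 1) * A y * deriv h y * Real.exp (-ψ y))
      (Filter.comap (fun x : ℝ => (x : EReal)) (nhds dp) ⊓ Filter.principal D) (nhds 0))
    (hint1 : IntegrableOn (fun y => (Real.log (h y) + 1) * Lstar h y * Real.exp (-ψ y)) D)
    (hint2 : IntegrableOn (fun y => A y * (deriv h y)^2 / h y * Real.exp (-ψ y)) D) :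
    ∫ y in D, (Real.log (h y) + 1) * Lstar h y * (Real.exp (-ψ y) / Z)
      = - ∫ y in D, A y * (deriv h y)^2 / h y * (Real.exp (-ψ y) / Z) := by
  have hopen : IsOpen D := by
    rw [hDdef]
    exact isOpen_Ioo.preimage continuous_coe_real_ereal
  set g : ℝ → ℝ := fun y => (Real.log (h y) + 1) * A y * deriv h y * Real.exp (-ψ y) with hg_def
  set F : ℝ → ℝ := fun y => (Real.log (h y) + 1) * Lstar h y * Real.exp (-ψ y)
      + A y * (deriv h y)^2 / h y * Real.exp (-ψ y) with hF_def
  have hdh : ContDiffOn ℝ 1 (deriv h) D := hh.deriv_of_isOpen hopen (by norm_num)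
  have hderiv : ∀ y ∈ D, HasDerivAt g (F y) y := by
    intro y hy
    have hyD : D ∈ nhds y := hopen.mem_nhds hy
    have hAd : HasDerivAt A (deriv A y) y :=
      ((hA.contDiffAt hyD).differentiableAt one_ne_zero).hasDerivAt
    have hψd : HasDerivAt ψ (deriv ψ y) y :=
      ((hψ.contDiffAt hyD).differentiableAt one_ne_zero).hasDerivAt
    have hhd : HasDerivAt h (deriv h y) y :=
      ((hh.contDiffAt hyD).differentiableAt (by norm_num)).hasDerivAt
    have hhdd : HasDerivAt (deriv h) (deriv (deriv h) y) y :=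
      ((hdh.contDiffAt hyD).differentiableAt one_ne_zero).hasDerivAt
    have hexp : HasDerivAt (fun y => Real.exp (-ψ y)) (Real.exp (-ψ y) * -deriv ψ y) y :=
      hψd.neg.exp
    have hlog : HasDerivAt (fun y => Real.log (h y) + 1) (deriv h y / h y) y :=
      (hhd.log (hh_pos y hy).ne').add_const 1
    have := ((hlog.mul hAd).mul hhdd).mul hexp
    refine this.congr_deriv ?_
    rw [hF_def]
    simp only [Pi.mul_apply]
    rw [hL]
    have hhy : h y ≠ 0 := (hh_pos y hy).ne'
    field_simp
    ring
  have h0 : ∫ x in D, F x = 0 := int_deriv_zero dm dp hd D hDdef g F hderiv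
    (hint1.add hint2) hbm hbp
  have hadd : ∫ x in D, F x = (∫ y in D, (Real.log (h y) + 1) * Lstar h y * Real.exp (-ψ y))
      + ∫ y in D, A y * (deriv h y)^2 / h y * Real.exp (-ψ y) :=
    MeasureTheory.integral_add hint1 hint2
  have hkey : (∫ y in D, (Real.log (h y) + 1) * Lstar h y * Real.exp (-ψ y))
      = -∫ y in D, A y * (deriv h y)^2 / h y * Real.exp (-ψ y) := by
    rw [hadd] at h0; linarith
  calc ∫ y in D, (Real.log (h y) + 1) * Lstar h y * (Real.exp (-ψ y) / Z)
      = (∫ y in D, (Real.log (h y) + 1) * Lstar h y * Real.exp (-ψ y)) / Z := by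
        simp_rw [← mul_div_assoc, MeasureTheory.integral_div]
    _ = (-∫ y in D, A y * (deriv h y)^2 / h y * Real.exp (-ψ y)) / Z := by rw [hkey]
    _ = - ∫ y in D, A y * (deriv h y)^2 / h y * (Real.exp (-ψ y) / Z) := by
        simp_rw [← mul_div_assoc, MeasureTheory.integral_div, neg_div]
end
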